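/- Let Γ be a connected r-regular graph with adjacency matrix A, and define polynomials F_0(x)=1, F_1(x)=x, F_2(x)=x²−r, and F_j(x)=xF_{j−1}(x)−(r−1)F_{j−2}(x) for j ≥ 3. Then for any vertices u, v and any nonnegative integer ℓ, the (u,v) entry of F_ℓ(A) equals the number of non-backtracking walks of length ℓ from u to v. -/

import Mathlib

open Polynomial

/-- The orthogonal polynomials `F_j` with parameter `r`:
`F_0 = 1`, `F_1 = x`, `F_2 = x² - r`, `F_j = x F_{j-1} - (r-1) F_{j-2}` for `j ≥ 3`. -/
noncomputable def Fpoly (r : ℝ) : ℕ → Polynomial ℝ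
  | 0 => 1
  | 1 => X
  | 2 => X ^ 2 - C r
  | (j + 3) => X * Fpoly r (j + 2) - C (r - 1) * Fpoly r (j + 1)

/-- The number of non-backtracking walks of length `ℓ` from `u` to `v` in `G`, encoded as
sequences `w : Fin (ℓ+1) → V` with `w 0 = u`, `w ℓ = v`, consecutive vertices adjacent,
and `w i ≠ w (i+2)`. -/
noncomputable def nbWalkCount {V : Type*} [Fintype V] (G : SimpleGraph V) (ℓ : ℕ) (u v : V) :
    ℕ :=
  Set.ncard {w : Fin (ℓ + 1) → V |
    w 0 = u ∧ w (Fin.last ℓ) = v ∧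
    (∀ i : Fin ℓ, G.Adj (w i.castSucc) (w i.succ)) ∧
    ∀ (i : ℕ) (h : i + 2 < ℓ + 1), w ⟨i, by omega⟩ ≠ w ⟨i + 2, h⟩}

namespace NBaux
variable {V : Type*} [Fintype V] [DecidableEq V] (G : SimpleGraph V) [DecidableRel G.Adj]

open Classical in
noncomputable def W (ℓ : ℕ) (u v : V) : Finset (Fin (ℓ + 1) → V) :=
  Finset.univ.filter (fun w =>
    w 0 = u ∧ w (Fin.last ℓ) = v ∧
    (∀ i : Fin ℓ, G.Adj (w i.castSucc) (w i.succ)) ∧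
    ∀ (i : ℕ) (h : i + 2 < ℓ + 1), w ⟨i, by omega⟩ ≠ w ⟨i + 2, h⟩)

lemma mem_W {ℓ : ℕ} {u v : V} {w : Fin (ℓ+1) → V} : w ∈ W G ℓ u v ↔
    (w 0 = u ∧ w (Fin.last ℓ) = v ∧
    (∀ i : Fin ℓ, G.Adj (w i.castSucc) (w i.succ)) ∧
    ∀ (i : ℕ) (h : i + 2 < ℓ + 1), w ⟨i, by omega⟩ ≠ w ⟨i + 2, h⟩) := by
  classical
  simp [W]

lemma nbWalkCount_eq (ℓ : ℕ) (u v : V) : nbWalkCount G ℓ u v = (W G ℓ u v).card := by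
  classical
  rw [nbWalkCount, ← Set.ncard_coe_finset]
  congr 1
  ext w
  simp [mem_W]

lemma nb_zero (u v : V) : nbWalkCount G 0 u v = if u = v then 1 else 0 := by
  rw [nbWalkCount_eq]
  split_ifs with h
  · subst h
    rw [Finset.card_eq_one]
    refine ⟨fun _ => u, ?_⟩
    ext w
    simp only [mem_W, Finset.mem_singleton]
    constructor
    · rintro ⟨h0, -, -, -⟩
      funext i
      fin_cases i
      exact h0
    · rintro rfl
      refine ⟨rfl, rfl, fun i => i.elim0, fun i hi => by omega⟩
  · rw [Finset.card_eq_zero]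
    ext w
    simp only [mem_W, Finset.notMem_empty, iff_false]
    rintro ⟨h0, h1, -, -⟩
    exact h (h0 ▸ h1 ▸ rfl)

lemma nb_one (u v : V) : nbWalkCount G 1 u v = if G.Adj u v then 1 else 0 := by
  rw [nbWalkCount_eq]
  split_ifs with h
  · rw [Finset.card_eq_one]
    refine ⟨![u, v], ?_⟩
    ext w
    simp only [mem_W, Finset.mem_singleton]
    constructor
    · rintro ⟨h0, h1, -, -⟩
      funext i
      fin_cases i
      · exact h0
      · exact h1
    · rintro rfl
      refine ⟨rfl, rfl, fun i => ?_, fun i hi => by omega⟩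
      fin_cases i
      simpa using h
  · rw [Finset.card_eq_zero]
    ext w
    simp only [mem_W, Finset.notMem_empty, iff_false]
    rintro ⟨h0, h1, hadj, -⟩
    have := hadj 0
    rw [show ((0:Fin 1)).castSucc = 0 from rfl, h0, show ((0:Fin 1)).succ = Fin.last 1 from rfl, h1] at this
    exact h this

end NBaux

namespace NBaux
variable {V : Type*} [Fintype V] [DecidableEq V] {G : SimpleGraph V} [DecidableRel G.Adj]

lemma fmk {n a b : ℕ} (ha : a < n) (hb : b < n) (h : a = b) :
    (⟨a, ha⟩ : Fin n) = ⟨b, hb⟩ := Fin.ext h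

lemma tail_mem_W {m : ℕ} {x v : V} {f : Fin (m + 2) → V} (hf : f ∈ W G (m+1) x v) :
    Fin.tail f ∈ W G m (f 1) v := by
  rw [mem_W] at hf ⊢
  obtain ⟨h0, hlast, hadj, hnb⟩ := hf
  refine ⟨?_, ?_, ?_, ?_⟩
  · show f (0 : Fin (m+1)).succ = f 1
    rw [Fin.succ_zero_eq_one]
  · show f (Fin.last m).succ = v
    rw [Fin.succ_last]
    exact hlast
  · intro i
    have := hadj i.succ
    rw [← Fin.succ_castSucc] at this
    exact this
  · intro i hb
    have := hnb (i+1) (by omega)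
    show f (⟨i, by omega⟩ : Fin (m+1)).succ ≠ f (⟨i+2, hb⟩ : Fin (m+1)).succ
    rw [Fin.succ_mk, Fin.succ_mk]
    rw [fmk (n := m+2) (by omega) (by omega) (show i+2+1 = i+1+2 by omega)]
    exact this

lemma cons_mem_W {m : ℕ} {x v : V} {f : Fin (m+1) → V} (hf : f ∈ W G m x v) (w' : V)
    (hadj : G.Adj w' x) (hne : ∀ hm : 0 < m, w' ≠ f ⟨1, by omega⟩) :
    Fin.cons w' f ∈ W G (m+1) w' v := by
  rw [mem_W] at hf ⊢
  obtain ⟨h0, hlast, hadjf, hnb⟩ := hf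
  refine ⟨Fin.cons_zero _ _, ?_, ?_, ?_⟩
  · rw [← Fin.succ_last, Fin.cons_succ]
    exact hlast
  · intro i
    induction i using Fin.cases with
    | zero =>
      rw [Fin.castSucc_zero, Fin.cons_zero, Fin.succ_zero_eq_one,
        show (1 : Fin (m+2)) = (0 : Fin (m+1)).succ from (Fin.succ_zero_eq_one).symm,
        Fin.cons_succ, h0]
      exact hadj
    | succ j =>
      rw [← Fin.succ_castSucc, Fin.cons_succ, Fin.cons_succ]
      exact hadjf j
  · intro i hb
    match i with
    | 0 =>
      rw [show (⟨0, by omega⟩ : Fin (m+2)) = 0 from rfl, Fin.cons_zero,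
        show (⟨2, hb⟩ : Fin (m+2)) = (⟨1, by omega⟩ : Fin (m+1)).succ from rfl, Fin.cons_succ]
      exact hne (by omega)
    | (i+1) =>
      rw [show (⟨i+1, by omega⟩ : Fin (m+2)) = (⟨i, by omega⟩ : Fin (m+1)).succ from rfl,
        show (⟨i+1+2, hb⟩ : Fin (m+2)) = (⟨i+2, by omega⟩ : Fin (m+1)).succ from rfl,
        Fin.cons_succ, Fin.cons_succ]
      exact hnb i (by omega)

end NBaux

namespace NBaux
variable {V : Type*} [Fintype V] [DecidableEq V] {G : SimpleGraph V} [DecidableRel G.Adj]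

lemma nb_zero_deg (hreg : G.IsRegularOfDegree 0) (m : ℕ) (u v : V) :
    nbWalkCount G (m+1) u v = 0 := by
  rw [nbWalkCount_eq, Finset.card_eq_zero]
  ext w
  simp only [mem_W, Finset.notMem_empty, iff_false]
  rintro ⟨-, -, hadj, -⟩
  have h := hadj ⟨0, by omega⟩
  have : w (⟨0, by omega⟩ : Fin (m+1)).succ ∈ G.neighborFinset (w (⟨0, by omega⟩ : Fin (m+1)).castSucc) := by
    rw [SimpleGraph.mem_neighborFinset]; exact h
  have h2 := hreg (w (⟨0, by omega⟩ : Fin (m+1)).castSucc)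
  rw [SimpleGraph.degree, Finset.card_eq_zero] at h2
  rw [h2] at this
  exact absurd this (Finset.notMem_empty _)

lemma nb_two' {r : ℕ} (hreg : G.IsRegularOfDegree r) (u v : V) :
    ((G.neighborFinset u).filter (fun w => G.Adj w v)).card
      = nbWalkCount G 2 u v + if u = v then r else 0 := by
  classical
  rw [nbWalkCount_eq]
  by_cases huv : u = v
  · subst huv
    simp only [if_pos rfl]
    have h1 : (G.neighborFinset u).filter (fun w => G.Adj w u) = G.neighborFinset u := by
      ext w
      simp only [Finset.mem_filter, SimpleGraph.mem_neighborFinset, and_iff_left_iff_imp]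
      exact fun h => h.symm
    have h2 : W G 2 u u = ∅ := by
      ext w
      simp only [mem_W, Finset.notMem_empty, iff_false]
      rintro ⟨h0, hlast, -, hnb⟩
      exact hnb 0 (by omega) (by
        rw [show (⟨0, by omega⟩ : Fin 3) = 0 from rfl, show (⟨2, by omega⟩ : Fin 3) = Fin.last 2 from rfl,
          h0, hlast])
    rw [h1, h2, Finset.card_empty, zero_add]
    simpa using hreg u
  · rw [if_neg huv, add_zero]
    symm
    apply Finset.card_bij (fun w _ => w 1)
    · rintro w hw
      rw [mem_W] at hw
      obtain ⟨h0, hlast, hadj, -⟩ := hw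
      simp only [Finset.mem_filter, SimpleGraph.mem_neighborFinset]
      constructor
      · have := hadj 0
        rwa [Fin.castSucc_zero, h0, Fin.succ_zero_eq_one] at this
      · have := hadj 1
        rwa [show (1 : Fin 2).succ = Fin.last 2 from rfl, hlast,
          show (1 : Fin 2).castSucc = 1 from rfl] at this
    · rintro w₁ hw₁ w₂ hw₂ h
      rw [mem_W] at hw₁ hw₂
      obtain ⟨h0₁, hl₁, -, -⟩ := hw₁
      obtain ⟨h0₂, hl₂, -, -⟩ := hw₂
      funext i
      fin_cases i
      · exact h0₁.trans h0₂.symm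
      · exact h
      · exact hl₁.trans hl₂.symm
    · rintro w hw
      simp only [Finset.mem_filter, SimpleGraph.mem_neighborFinset] at hw
      refine ⟨![u, w, v], ?_, rfl⟩
      rw [mem_W]
      refine ⟨rfl, rfl, ?_, ?_⟩
      · intro i
        fin_cases i
        · exact hw.1
        · exact hw.2
      · intro i hi
        have hi0 : i = 0 := by omega
        subst hi0
        simpa using huv

lemma nb_rec {r : ℕ} (hreg : G.IsRegularOfDegree r) (ℓ : ℕ) (u v : V) :
    ∑ w : V, (G.adjMatrix ℕ) u w * nbWalkCount G (ℓ+2) w v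
      = nbWalkCount G (ℓ+3) u v + (r-1) * nbWalkCount G (ℓ+1) u v := by
  classical
  set S : Finset (Fin (ℓ+4) → V) := Finset.univ.filter (fun g =>
    g 0 = u ∧ G.Adj u (g ⟨1, by omega⟩) ∧ Fin.tail g ∈ W G (ℓ+2) (g ⟨1, by omega⟩) v) with hS
  have mem_S : ∀ g : Fin (ℓ+4) → V, g ∈ S ↔
      (g 0 = u ∧ G.Adj u (g ⟨1, by omega⟩) ∧ Fin.tail g ∈ W G (ℓ+2) (g ⟨1, by omega⟩) v) := by
    intro g; rw [hS, Finset.mem_filter]; exact ⟨fun h => h.2, fun h => ⟨Finset.mem_univ _, h⟩⟩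
  -- Claim 1
  have claim1 : ∑ w : V, (G.adjMatrix ℕ) u w * nbWalkCount G (ℓ+2) w v = S.card := by
    rw [Finset.card_eq_sum_card_fiberwise (f := fun g => g ⟨1, by omega⟩) (t := Finset.univ)
      (fun x _ => Finset.mem_univ _)]
    refine Finset.sum_congr rfl (fun w _ => ?_)
    by_cases hA : G.Adj u w
    · rw [SimpleGraph.adjMatrix_apply, if_pos hA, one_mul, nbWalkCount_eq]
      symm
      apply Finset.card_bij (fun g _ => Fin.tail g)
      · rintro g hg
        rw [Finset.mem_filter] at hg
        obtain ⟨hgS, hg1⟩ := hg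
        rw [mem_S] at hgS
        rw [← hg1]
        exact hgS.2.2
      · rintro g₁ hg₁ g₂ hg₂ h
        rw [Finset.mem_filter] at hg₁ hg₂
        rw [mem_S] at hg₁ hg₂
        have e1 : g₁ = Fin.cons (g₁ 0) (Fin.tail g₁) := (Fin.cons_self_tail g₁).symm
        have e2 : g₂ = Fin.cons (g₂ 0) (Fin.tail g₂) := (Fin.cons_self_tail g₂).symm
        rw [e1, e2, hg₁.1.1, hg₂.1.1, h]
      · rintro f hf
        refine ⟨Fin.cons u f, ?_, ?_⟩
        · have hf0 : f 0 = w := ((mem_W (G := G)).mp hf).1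
          have h1 : (Fin.cons u f : Fin (ℓ+4) → V) ⟨1, by omega⟩ = f 0 := by
            rw [show (⟨1, by omega⟩ : Fin (ℓ+4)) = (0 : Fin (ℓ+3)).succ from rfl, Fin.cons_succ]
          rw [Finset.mem_filter, mem_S]
          refine ⟨⟨Fin.cons_zero _ _, ?_, ?_⟩, ?_⟩
          · rw [h1, hf0]; exact hA
          · rw [h1, hf0, Fin.tail_cons]; exact hf
          · rw [h1, hf0]
        · rw [Fin.tail_cons]
    · rw [SimpleGraph.adjMatrix_apply, if_neg hA, zero_mul, eq_comm, Finset.card_eq_zero]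
      ext g
      simp only [Finset.mem_filter, Finset.notMem_empty, iff_false, not_and]
      intro hgS hg1
      rw [mem_S] at hgS
      rw [hg1] at hgS
      exact hA hgS.2.1
  -- decomposition
  set Bad : Finset (Fin (ℓ+4) → V) := S.filter (fun g => g 0 = g ⟨2, by omega⟩) with hBad
  have claim2 : W G (ℓ+3) u v = S.filter (fun g => ¬ g 0 = g ⟨2, by omega⟩) := by
    ext g
    rw [Finset.mem_filter, mem_S, mem_W]
    constructor
    · rintro ⟨h0, hlast, hadj, hnb⟩
      have htail := tail_mem_W (G := G) (m := ℓ+2) (x := u) (f := g) (by rw [mem_W]; exact ⟨h0, hlast, hadj, hnb⟩)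
      have hg1 : g (1 : Fin (ℓ+4)) = g ⟨1, by omega⟩ := rfl
      refine ⟨⟨h0, ?_, ?_⟩, ?_⟩
      · have := hadj 0
        rwa [Fin.castSucc_zero, h0, Fin.succ_zero_eq_one, hg1] at this
      · rwa [hg1] at htail
      · have := hnb 0 (by omega)
        rwa [show (⟨0, by omega⟩ : Fin (ℓ+4)) = 0 from rfl] at this
    · rintro ⟨⟨h0, hadj1, htail⟩, hne⟩
      have hcons := cons_mem_W (m := ℓ+2) htail (g 0) (by rw [h0]; exact hadj1)
        (fun _ => by
          rw [show Fin.tail g ⟨1, by omega⟩ = g ⟨2, by omega⟩ from rfl]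
          exact hne)
      rw [Fin.cons_self_tail] at hcons
      rw [mem_W] at hcons
      obtain ⟨_, hlast, hadj, hnb⟩ := hcons
      exact ⟨h0, hlast, hadj, hnb⟩
  have claim2' : S.card = (W G (ℓ+3) u v).card + Bad.card := by
    rw [claim2, hBad]
    rw [← Finset.card_filter_add_card_filter_not (s := S)
      (p := fun g : Fin (ℓ+4) → V => g 0 = g ⟨2, by omega⟩)]
    exact Nat.add_comm _ _
  -- Claim 3
  have maps : ∀ g ∈ Bad, Fin.tail (Fin.tail g) ∈ W G (ℓ+1) u v := by
    rintro g hg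
    rw [hBad, Finset.mem_filter, mem_S] at hg
    obtain ⟨⟨hg0, hgadj, hgtail⟩, hg02⟩ := hg
    have := tail_mem_W (m := ℓ+1) (f := Fin.tail g) (by
      rw [show g ⟨1, by omega⟩ = g (1 : Fin (ℓ+4)) from rfl] at hgtail
      exact hgtail)
    have e : Fin.tail g 1 = u := by
      rw [show Fin.tail g (1 : Fin (ℓ+3)) = g ⟨2, by omega⟩ from rfl, ← hg02, hg0]
    rwa [e] at this
  have fib : ∀ h ∈ W G (ℓ+1) u v,
      (Bad.filter (fun g => Fin.tail (Fin.tail g) = h)).card = r - 1 := by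
    intro h hh
    have hmemW := hh
    rw [mem_W] at hmemW
    obtain ⟨hh0, hhlast, hhadj, hhnb⟩ := hmemW
    have h1nbr : h ⟨1, by omega⟩ ∈ G.neighborFinset u := by
      rw [SimpleGraph.mem_neighborFinset]
      have := hhadj ⟨0, by omega⟩
      rwa [show (⟨0, by omega⟩ : Fin (ℓ+1)).castSucc = 0 from rfl,
        show (⟨0, by omega⟩ : Fin (ℓ+1)).succ = ⟨1, by omega⟩ from rfl, hh0] at this
    have hcard : ((G.neighborFinset u).erase (h ⟨1, by omega⟩)).card = r - 1 := by
      rw [Finset.card_erase_of_mem h1nbr]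
      have hd := hreg u
      unfold SimpleGraph.degree at hd
      rw [hd]
    rw [← hcard]
    apply Finset.card_bij (fun g _ => g ⟨1, by omega⟩)
    · rintro g hg
      rw [Finset.mem_filter, hBad, Finset.mem_filter, mem_S] at hg
      obtain ⟨⟨⟨hg0, hgadj, hgtail⟩, hg02⟩, hgdd⟩ := hg
      rw [Finset.mem_erase]
      constructor
      · have hnb0 := ((mem_W (G := G)).mp hgtail).2.2.2 0 (by omega)
        rw [show Fin.tail g ⟨0, by omega⟩ = g ⟨1, by omega⟩ from rfl,
          show Fin.tail g ⟨2, by omega⟩ = g ⟨3, by omega⟩ from rfl] at hnb0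
        have e3 : h ⟨1, by omega⟩ = g ⟨3, by omega⟩ := by
          rw [← hgdd]; rfl
        rw [e3]
        exact hnb0
      · rw [SimpleGraph.mem_neighborFinset]
        exact hgadj
    · rintro g₁ hg₁ g₂ hg₂ hval
      have key : ∀ g, g ∈ (Bad.filter (fun g => Fin.tail (Fin.tail g) = h)) →
          g = Fin.cons u (Fin.cons (g ⟨1, by omega⟩) h) := by
        intro g hg
        rw [Finset.mem_filter, hBad, Finset.mem_filter, mem_S] at hg
        obtain ⟨⟨⟨hg0, hgadj, hgtail⟩, hg02⟩, hgdd⟩ := hg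
        funext i
        induction i using Fin.cases with
        | zero => rw [Fin.cons_zero]; exact hg0
        | succ j =>
          rw [Fin.cons_succ]
          induction j using Fin.cases with
          | zero => rw [Fin.cons_zero]; rfl
          | succ k =>
            rw [Fin.cons_succ, ← hgdd]
            rfl
      rw [key g₁ hg₁, key g₂ hg₂, hval]
    · rintro w' hw'
      rw [Finset.mem_erase, SimpleGraph.mem_neighborFinset] at hw'
      obtain ⟨hwne, hwadj⟩ := hw'
      refine ⟨Fin.cons u (Fin.cons w' h), ?_, ?_⟩
      · have hg1 : (Fin.cons u (Fin.cons w' h) : Fin (ℓ+4) → V) ⟨1, by omega⟩ = w' := by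
          rw [show (⟨1, by omega⟩ : Fin (ℓ+4)) = (0 : Fin (ℓ+3)).succ from rfl, Fin.cons_succ,
            Fin.cons_zero]
        have hconsW : Fin.cons w' h ∈ W G (ℓ+2) w' v :=
          cons_mem_W hh (w' := w') hwadj.symm (fun _ => hwne)
        rw [Finset.mem_filter, hBad, Finset.mem_filter, mem_S]
        refine ⟨⟨⟨Fin.cons_zero _ _, ?_, ?_⟩, ?_⟩, ?_⟩
        · rw [hg1]; exact hwadj
        · rw [hg1, Fin.tail_cons]; exact hconsW
        · rw [Fin.cons_zero,
            show (⟨2, by omega⟩ : Fin (ℓ+4)) = ((⟨1, by omega⟩ : Fin (ℓ+3))).succ from rfl,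
            Fin.cons_succ,
            show (⟨1, by omega⟩ : Fin (ℓ+3)) = ((⟨0, by omega⟩ : Fin (ℓ+2))).succ from rfl,
            Fin.cons_succ,
            show h ⟨0, by omega⟩ = h 0 from rfl, hh0]
        · rw [Fin.tail_cons, Fin.tail_cons]
      · rw [show (⟨1, by omega⟩ : Fin (ℓ+4)) = (0 : Fin (ℓ+3)).succ from rfl, Fin.cons_succ,
          Fin.cons_zero]
  have claim3 : Bad.card = (r-1) * (W G (ℓ+1) u v).card := by
    rw [Finset.card_eq_sum_card_fiberwise maps, Finset.sum_congr rfl fib, Finset.sum_const,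
      smul_eq_mul, mul_comm]
  rw [claim1, claim2', claim3, nbWalkCount_eq, nbWalkCount_eq]

end NBaux


theorem singleton_nonbacktracking (r : ℕ) {V : Type*} [Fintype V] [DecidableEq V]
    (G : SimpleGraph V) [DecidableRel G.Adj]
    (hconn : G.Connected) (hreg : G.IsRegularOfDegree r)
    (ℓ : ℕ) (u v : V) :
    (Polynomial.aeval (G.adjMatrix ℝ)) (Fpoly r ℓ) u v = nbWalkCount G ℓ u v := by
  induction ℓ using Nat.strong_induction_on generalizing u v with
  | _ ℓ ih =>
  match ℓ with
  | 0 =>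
    rw [show Fpoly r 0 = 1 from rfl, map_one, NBaux.nb_zero G u v, Matrix.one_apply]
    split_ifs <;> simp
  | 1 =>
    rw [show Fpoly r 1 = X from rfl, aeval_X, NBaux.nb_one G u v, SimpleGraph.adjMatrix_apply]
    split_ifs <;> simp
  | 2 =>
    rw [show Fpoly r 2 = X ^ 2 - C (r : ℝ) from rfl, map_sub, map_pow, aeval_X, aeval_C,
      Matrix.sub_apply, sq, SimpleGraph.adjMatrix_mul_apply, Matrix.algebraMap_matrix_apply]
    have h2 := NBaux.nb_two' (G := G) hreg u v
    have hsum : ∑ w ∈ G.neighborFinset u, (G.adjMatrix ℝ) w v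
        = (((G.neighborFinset u).filter (fun w => G.Adj w v)).card : ℝ) := by
      rw [← Finset.sum_boole]
      refine Finset.sum_congr rfl fun w _ => ?_
      rw [SimpleGraph.adjMatrix_apply]
    rw [hsum, h2]
    push_cast
    split_ifs <;> simp [Algebra.algebraMap_self_apply]
  | (j + 3) =>
    rw [show Fpoly r (j+3) = X * Fpoly r (j+2) - C ((r:ℝ) - 1) * Fpoly r (j+1) from rfl,
      map_sub, map_mul, map_mul, aeval_X, aeval_C, Matrix.sub_apply, Matrix.mul_apply,
      Algebra.algebraMap_eq_smul_one, smul_mul_assoc, one_mul, Matrix.smul_apply,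
      smul_eq_mul]
    have hM1 := ih (j+1) (by omega) u v
    rw [hM1]
    have hrec := NBaux.nb_rec (G := G) hreg j u v
    have hcast : ∑ w : V, (G.adjMatrix ℝ) u w * (aeval (G.adjMatrix ℝ)) (Fpoly r (j+2)) w v
        = ((∑ w : V, (G.adjMatrix ℕ) u w * nbWalkCount G (j+2) w v : ℕ) : ℝ) := by
      push_cast
      refine Finset.sum_congr rfl fun w _ => ?_
      rw [ih (j+2) (by omega) w v, SimpleGraph.adjMatrix_apply, SimpleGraph.adjMatrix_apply]
      split_ifs <;> simp
    rw [hcast, hrec]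
    rcases Nat.eq_zero_or_pos r with hr | hr
    · subst hr
      rw [NBaux.nb_zero_deg (G := G) hreg j u v]
      push_cast
      ring
    · push_cast [Nat.cast_sub hr]
      ring
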